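/- Let λ be the canonical additive character of F_q and let a ∈ F_q^*. Then ∑_{w∈O(3,q)} λ(a·Tr w) = (λ(a)+λ(-a))·q·K(λ;a²) = 2·Re(λ(a))·q·K(λ;a²), where Tr denotes the matrix trace and Re denotes the real part. -/

import Mathlib

open Finset Matrix

/-- The canonical additive character `λ(x) = e^{2πi·tr(x)/3}` of a finite field of
characteristic 3, where tr is the absolute trace to F_3. -/
noncomputable def canChar (F : Type) [Field F] [Fintype F] [Algebra (ZMod 3) F] (x : F) : ℂ :=
  Complex.exp (2 * Real.pi * Complex.I * ((Algebra.trace (ZMod 3) F x).val : ℂ) / 3)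

/-- The Kloosterman sum `K(λ;a) = ∑_{α ∈ F^*} λ(α + a·α⁻¹)` for the canonical character. -/
noncomputable def kloos (F : Type) [Field F] [Fintype F] [DecidableEq F]
    [Algebra (ZMod 3) F] (a : F) : ℂ :=
  ∑ α ∈ Finset.univ.filter (fun α : F => α ≠ 0), canChar F (α + a * α⁻¹)

/-- The matrix J defining the orthogonal group O(3,q). -/
def matJ (F : Type) [Field F] : Matrix (Fin 3) (Fin 3) F := !![0,1,0; 1,0,0; 0,0,1]

section Aux
variable (F : Type) [Field F] [Fintype F] [DecidableEq F] [Algebra (ZMod 3) F]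

omit [Fintype F] [DecidableEq F] in
lemma char3 : (3 : F) = 0 := by
  calc (3 : F) = algebraMap (ZMod 3) F 3 := by rw [map_ofNat]
    _ = 0 := by rw [show (3 : ZMod 3) = 0 by decide, map_zero]

omit [Fintype F] [DecidableEq F] in
lemma one_ne_negone : (1 : F) ≠ -1 := by
  intro h
  have h3 := char3 F
  have : (1:F) = 0 := by linear_combination h3 - h
  exact one_ne_zero this

lemma exp_mod3 (m : ℕ) : Complex.exp (2*Real.pi*Complex.I*(m:ℂ)/3)
    = Complex.exp (2*Real.pi*Complex.I*((m % 3 : ℕ):ℂ)/3) := by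
  conv_lhs => rw [← Nat.mod_add_div m 3]
  rw [show (2*(Real.pi:ℂ)*Complex.I*((m % 3 + 3 * (m / 3) : ℕ):ℂ)/3 : ℂ)
      = 2*(Real.pi:ℂ)*Complex.I*((m%3:ℕ):ℂ)/3 + ((m/3 : ℕ):ℂ)*(2*Real.pi*Complex.I) by push_cast; ring,
    Complex.exp_add, Complex.exp_nat_mul_two_pi_mul_I, mul_one]

omit [DecidableEq F] in
lemma canChar_add (x y : F) : canChar F (x+y) = canChar F x * canChar F y := by
  unfold canChar
  rw [map_add, ZMod.val_add, ← exp_mod3, ← Complex.exp_add]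
  push_cast
  ring_nf

omit [DecidableEq F] in
lemma canChar_zero : canChar F 0 = 1 := by
  unfold canChar; simp

omit [DecidableEq F] in
lemma canChar_ne_zero (x : F) : canChar F x ≠ 0 := Complex.exp_ne_zero _

omit [DecidableEq F] in
lemma canChar_conj (x : F) : (starRingEnd ℂ) (canChar F x) = canChar F (-x) := by
  have h1 : canChar F (-x) * canChar F x = 1 := by
    rw [← canChar_add, neg_add_cancel, canChar_zero]
  have h2 : (starRingEnd ℂ) (canChar F x) * canChar F x = 1 := by
    unfold canChar
    rw [← Complex.exp_conj, ← Complex.exp_add]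
    rw [show ((starRingEnd ℂ) (2*Real.pi*Complex.I*((Algebra.trace (ZMod 3) F x).val : ℂ)/3)) =
      -(2*Real.pi*Complex.I*((Algebra.trace (ZMod 3) F x).val : ℂ)/3) by
        simp [-ZMod.natCast_val, map_div₀, _root_.map_mul, map_ofNat, Complex.conj_ofReal,
          Complex.conj_I, Complex.conj_natCast]; ring]
    rw [neg_add_cancel, Complex.exp_zero]
  exact mul_right_cancel₀ (canChar_ne_zero F x) (h2.trans h1.symm)

omit [DecidableEq F] in
lemma canChar_ne_one (x : F) (hx : Algebra.trace (ZMod 3) F x ≠ 0) : canChar F x ≠ 1 := by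
  unfold canChar
  intro h
  rw [Complex.exp_eq_one_iff] at h
  obtain ⟨n, hn⟩ := h
  have hI : (2*Real.pi*Complex.I : ℂ) ≠ 0 := by
    simp [Real.pi_ne_zero, Complex.I_ne_zero, Complex.ofReal_ne_zero]
  have h2 : (2*Real.pi*Complex.I) * (((Algebra.trace (ZMod 3) F x).val : ℕ) : ℂ)
      = (2*Real.pi*Complex.I) * (3*n) := by linear_combination 3 * hn
  have := mul_left_cancel₀ hI h2
  have hv : ((Algebra.trace (ZMod 3) F x).val : ℤ) = 3 * n := by exact_mod_cast this
  have hlt : (Algebra.trace (ZMod 3) F x).val < 3 := ZMod.val_lt _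
  have hne : (Algebra.trace (ZMod 3) F x).val ≠ 0 := by
    intro h0; apply hx; exact (ZMod.val_eq_zero _).mp h0
  omega

omit [DecidableEq F] in
lemma trace_exists (c : F) (hc : c ≠ 0) : ∃ b : F, Algebra.trace (ZMod 3) F (c * b) ≠ 0 := by
  haveI : Fact (Nat.Prime 3) := ⟨by norm_num⟩
  haveI : Module.Finite (ZMod 3) F := Module.finite_iff_finite.mpr inferInstance
  have h := Algebra.trace_ne_zero (ZMod 3) F
  rw [DFunLike.ne_iff] at h
  obtain ⟨x, hx⟩ := h
  exact ⟨c⁻¹ * x, by rwa [← mul_assoc, mul_inv_cancel₀ hc, one_mul]⟩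

omit [DecidableEq F] in
lemma sum_canChar (c : F) (hc : c ≠ 0) : ∑ x : F, canChar F (c * x) = 0 := by
  obtain ⟨b, hb⟩ := trace_exists F c hc
  have hne1 : canChar F (c*b) ≠ 1 := canChar_ne_one F _ hb
  have hshift : ∑ x : F, canChar F (c * x) = canChar F (c*b) * ∑ x : F, canChar F (c * x) := by
    rw [mul_sum]
    have := Fintype.sum_equiv (Equiv.addRight b) (fun x => canChar F (c*(x+b)))
      (fun y => canChar F (c*y)) (fun x => by rw [Equiv.coe_addRight])
    rw [← this]
    exact Finset.sum_congr rfl (fun x _ => by rw [mul_add, canChar_add, mul_comm])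
  have h0 : (canChar F (c*b) - 1) * (∑ x : F, canChar F (c*x)) = 0 := by linear_combination -hshift
  rcases mul_eq_zero.mp h0 with h | h
  · exact absurd (sub_eq_zero.mp h) hne1
  · exact h

/-- Parabolic cell parametrization. -/
def pmat (α ai β ε : F) : Matrix (Fin 3) (Fin 3) F :=
  !![α, α*β^2, -(α*β*ε); 0, ai, 0; 0, β, ε]

/-- Big cell parametrization. -/
def bmat (α ai β γ ε : F) : Matrix (Fin 3) (Fin 3) F :=
  !![α*γ^2, α + α*γ^2*β^2 - α*γ*ε*β, -(α*γ^2*β) - α*γ*ε;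
     ai, ai*β^2, -(ai*β);
     γ, γ*β^2 + ε*β, -(γ*β) + ε]

omit [Fintype F] [DecidableEq F] in
lemma pmat_mem (α ai β ε : F) (hai : α*ai = 1) (heps : ε*ε = 1) :
    (pmat F α ai β ε).det ≠ 0 ∧
    (pmat F α ai β ε)ᵀ * matJ F * (pmat F α ai β ε) = matJ F ∧
    (pmat F α ai β ε) 1 0 = 0 := by
  have h3 := char3 F
  refine ⟨?_, ?_, by simp [pmat]⟩
  · have hd : (pmat F α ai β ε).det = ε := by
      rw [Matrix.det_fin_three]; simp [pmat, Matrix.vecHead, Matrix.vecTail]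
      linear_combination ε*hai
    rw [hd]
    intro h0
    rw [h0, mul_zero] at heps
    exact zero_ne_one heps
  · ext i j
    fin_cases i <;> fin_cases j <;>
      simp [pmat, matJ, Matrix.mul_apply, Matrix.transpose_apply, Fin.sum_univ_three,
        Matrix.vecHead, Matrix.vecTail] <;>
      first
        | ring1
        | linear_combination hai
        | linear_combination (2*β^2)*hai + β^2*h3
        | linear_combination (-(β*ε))*hai
        | linear_combination heps

omit [Fintype F] [DecidableEq F] in
lemma bmat_mem (α ai β γ ε : F) (hai : α*ai = 1) (heps : ε*ε = 1) :
    (bmat F α ai β γ ε).det ≠ 0 ∧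
    (bmat F α ai β γ ε)ᵀ * matJ F * (bmat F α ai β γ ε) = matJ F ∧
    ¬ (bmat F α ai β γ ε) 1 0 = 0 := by
  have h3 := char3 F
  have hai0 : ai ≠ 0 := right_ne_zero_of_mul_eq_one hai
  refine ⟨?_, ?_, by simpa [bmat] using hai0⟩
  · have hd : (bmat F α ai β γ ε).det = -ε := by
      rw [Matrix.det_fin_three]; simp [bmat, Matrix.vecHead, Matrix.vecTail]
      linear_combination (-ε)*hai
    rw [hd]
    intro h0
    rw [neg_eq_zero] at h0
    rw [h0, mul_zero] at heps
    exact zero_ne_one heps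
  · ext i j
    fin_cases i <;> fin_cases j <;>
      simp [bmat, matJ, Matrix.mul_apply, Matrix.transpose_apply, Fin.sum_univ_three,
        Matrix.vecHead, Matrix.vecTail] <;>
      first
        | ring1
        | linear_combination (2*γ^2)*hai + γ^2*h3
        | linear_combination (1 - β*γ*ε + 2*β^2*γ^2)*hai + (β^2*γ^2)*h3
        | linear_combination (-(γ*ε) - 2*β*γ^2)*hai + (-(β*γ^2))*h3
        | linear_combination (2*β^2 - 2*β^3*γ*ε + 2*β^4*γ^2)*hai + β^2*heps + (β^2 + β^4*γ^2)*h3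
        | linear_combination (-β - 2*β^3*γ^2)*hai + β*heps + (-(β^3*γ^2))*h3
        | linear_combination (2*β*γ*ε + 2*β^2*γ^2)*hai + heps + (β^2*γ^2)*h3

omit [Fintype F] [DecidableEq F] in
lemma P_recon (w : Matrix (Fin 3) (Fin 3) F) (hO : wᵀ * matJ F * w = matJ F)
    (h10 : w 1 0 = 0) :
    w 0 0 * w 1 1 = 1 ∧ w 2 2 * w 2 2 = 1 ∧ w = pmat F (w 0 0) (w 1 1) (w 2 1) (w 2 2) := by
  have h3 := char3 F
  have e00 := congrFun (congrFun hO 0) 0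
  have e01 := congrFun (congrFun hO 0) 1
  have e02 := congrFun (congrFun hO 0) 2
  have e11 := congrFun (congrFun hO 1) 1
  have e12 := congrFun (congrFun hO 1) 2
  have e22 := congrFun (congrFun hO 2) 2
  simp [matJ, Matrix.mul_apply, Fin.sum_univ_three] at e00 e01 e02 e11 e12 e22
  have h20 : w 2 0 = 0 := mul_self_eq_zero.mp (by linear_combination e00 - 2*(w 0 0)*h10)
  have halpha : w 0 0 * w 1 1 = 1 := by linear_combination e01 - (w 0 1)*h10 - (w 2 1)*h20
  have hw00 : w 0 0 ≠ 0 := left_ne_zero_of_mul_eq_one halpha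
  have h12 : w 1 2 = 0 := by
    have h120 : w 0 0 * w 1 2 = 0 := by linear_combination e02 - (w 0 2)*h10 - (w 2 2)*h20
    rcases mul_eq_zero.mp h120 with h | h
    · exact absurd h hw00
    · exact h
  have heps : w 2 2 * w 2 2 = 1 := by linear_combination e22 - 2*(w 0 2)*h12
  have h01 : w 0 1 = w 0 0 * w 2 1 ^ 2 := by
    linear_combination (-(w 0 0))*e11 + (2*(w 0 1))*halpha + (w 0 1)*h3
  have h02 : w 0 2 = -(w 0 0 * w 2 1 * w 2 2) := by
    linear_combination (w 0 0)*e12 - (w 0 2)*halpha - (w 0 0 * w 0 1)*h12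
  refine ⟨halpha, heps, ?_⟩
  ext i j
  fin_cases i <;> fin_cases j <;> simp [pmat, Matrix.vecHead, Matrix.vecTail] <;>
    first | rfl | assumption

omit [Fintype F] [DecidableEq F] in
lemma row_eqs (w : Matrix (Fin 3) (Fin 3) F) (hO : wᵀ * matJ F * w = matJ F) :
    w * matJ F * wᵀ = matJ F := by
  have hJJ : matJ F * matJ F = 1 := by
    rw [matJ, Matrix.mul_fin_three, Matrix.one_fin_three]; norm_num
  have hv1 : matJ F * wᵀ * matJ F * w = 1 := by
    have h1 : matJ F * (wᵀ * matJ F * w) = matJ F * matJ F := by rw [hO]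
    rw [hJJ] at h1
    calc matJ F * wᵀ * matJ F * w = matJ F * (wᵀ * matJ F * w) := by
          simp only [Matrix.mul_assoc]
      _ = 1 := h1
  have hv2 : w * (matJ F * wᵀ * matJ F) = 1 := mul_eq_one_comm.mp hv1
  calc w * matJ F * wᵀ = w * matJ F * wᵀ * (matJ F * matJ F) := by rw [hJJ, Matrix.mul_one]
    _ = (w * (matJ F * wᵀ * matJ F)) * matJ F := by simp only [Matrix.mul_assoc]
    _ = matJ F := by rw [hv2, Matrix.one_mul]

omit [Fintype F] [DecidableEq F] in
lemma B_recon (w : Matrix (Fin 3) (Fin 3) F) (hO : wᵀ * matJ F * w = matJ F)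
    (h10 : w 1 0 ≠ 0) :
    (w 1 0)⁻¹ * (w 1 0) = 1 ∧
    (w 2 2 + w 2 0 * (-(w 1 2) * (w 1 0)⁻¹)) * (w 2 2 + w 2 0 * (-(w 1 2) * (w 1 0)⁻¹)) = 1 ∧
    w = bmat F (w 1 0)⁻¹ (w 1 0) (-(w 1 2) * (w 1 0)⁻¹) (w 2 0)
        (w 2 2 + w 2 0 * (-(w 1 2) * (w 1 0)⁻¹)) := by
  have h3 := char3 F
  have hO' := row_eqs F w hO
  have e00 := congrFun (congrFun hO 0) 0
  have e01 := congrFun (congrFun hO 0) 1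
  have e02 := congrFun (congrFun hO 0) 2
  have r11 := congrFun (congrFun hO' 1) 1
  have r12 := congrFun (congrFun hO' 1) 2
  have r22 := congrFun (congrFun hO' 2) 2
  simp [matJ, Matrix.mul_apply, Fin.sum_univ_three] at e00 e01 e02 r11 r12 r22
  set u := w 1 0 with hu
  set v := u⁻¹ with hv
  have huv : u * v = 1 := mul_inv_cancel₀ h10
  have f1 : w 0 0 * u = w 2 0 ^ 2 := by linear_combination -e00 + (w 0 0 * u)*h3
  have f2 : w 1 1 * u = w 1 2 ^ 2 := by linear_combination -r11 + (w 1 1 * u)*h3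
  have f3 : w 2 1 * u^2 = -(w 1 2 ^ 2 * w 2 0) - w 1 2 * w 2 2 * u := by
    linear_combination u*r12 - (w 2 0)*f2
  have heps : (w 2 2 + w 2 0 * (-(w 1 2) * v)) * (w 2 2 + w 2 0 * (-(w 1 2) * v)) = 1 := by
    linear_combination (u^2*v^2)*r22 - (2*v^2*(w 2 0))*f3 + ((w 2 0)^2*(w 1 2)^2*v^2)*h3
      - (2*(w 2 2 + w 2 0 * (-(w 1 2) * v))*(w 2 2))*huv - ((w 2 2)^2*(u*v-1))*huv
      + 2*huv + (u*v-1)*huv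
  refine ⟨inv_mul_cancel₀ h10, heps, ?_⟩
  ext i j
  fin_cases i <;> fin_cases j <;> simp [bmat, Matrix.vecHead, Matrix.vecTail] <;>
    first
      | rfl
      | ring1
      | linear_combination v*f1 - (w 0 0)*huv
      | linear_combination (u*v^2)*e01 - (v^2*(w 1 1))*f1 - (v^3*(w 2 0)^2)*f2 - (v^3*(w 2 0))*f3
          + (v^2*(w 2 0)^2*(w 1 1) + u*v^2*(w 2 0)*(w 2 1) - (w 0 1)*(u*v+1)
            + (w 2 0)*(w 1 2)*(w 2 2)*v^2 + v)*huv
      | linear_combination v*e02 - (v^2*(w 1 2))*f1 + (v*(w 0 0)*(w 1 2) - w 0 2)*huv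
          - (v^2*(w 1 2)*(w 2 0)^2)*h3
      | linear_combination (-(w 1 1)*(u*v+1))*huv + (u*v^2)*f2
      | linear_combination (-(w 1 2))*huv
      | linear_combination v^2*f3 - ((w 2 1)*(u*v+1))*huv - ((w 2 0)*(w 1 2)^2*v^2)*h3
          - ((w 1 2)*(w 2 2)*v)*huv

end Aux

/-- `∑_{w ∈ O(3,q)} λ(a·Tr w) = (λ(a)+λ(-a))·q·K(λ;a²) = 2·Re(λ(a))·q·K(λ;a²)` for the
canonical additive character λ and any a ∈ F_q^*, where q = 3^r. -/
theorem gauss_sum_O3_twisted (r : ℕ) (hr : 0 < r) (F : Type) [Field F] [Fintype F]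
    [DecidableEq F] [Algebra (ZMod 3) F] (hF : Fintype.card F = 3 ^ r)
    (a : F) (ha : a ≠ 0) :
    (∑ w ∈ Finset.univ.filter
        (fun w : Matrix (Fin 3) (Fin 3) F =>
          w.det ≠ 0 ∧ wᵀ * matJ F * w = matJ F),
      canChar F (a * w.trace)
      = (canChar F a + canChar F (-a)) * (3 ^ r : ℂ) * kloos F (a ^ 2)) ∧
    (∑ w ∈ Finset.univ.filter
        (fun w : Matrix (Fin 3) (Fin 3) F =>
          w.det ≠ 0 ∧ wᵀ * matJ F * w = matJ F),
      canChar F (a * w.trace)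
      = 2 * ((canChar F a).re : ℂ) * (3 ^ r : ℂ) * kloos F (a ^ 2)) := by
  have h3 := char3 F
  have hne : (1:F) ≠ -1 := one_ne_negone F
  set O : Finset (Matrix (Fin 3) (Fin 3) F) := Finset.univ.filter
      (fun w : Matrix (Fin 3) (Fin 3) F => w.det ≠ 0 ∧ wᵀ * matJ F * w = matJ F) with hO
  set f : Matrix (Fin 3) (Fin 3) F → ℂ := fun w => canChar F (a * w.trace) with hf
  set E : Finset F := {1, -1} with hE
  set Pair : Finset (F × F) := (Finset.univ ×ˢ Finset.univ).filter (fun p => p.1 * p.2 = 1)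
    with hPair
  have memPair : ∀ p : F × F, p ∈ Pair ↔ p.1 * p.2 = 1 := by
    intro p; simp [hPair]
  have memE : ∀ ε : F, ε ∈ E ↔ ε * ε = 1 := by
    intro ε
    rw [hE, Finset.mem_insert, Finset.mem_singleton, ← mul_self_eq_one_iff]
  -- the Kloosterman sum over Pair
  have pairK : ∑ p ∈ Pair, canChar F (a * p.1 + a * p.2) = kloos F (a^2) := by
    rw [kloos]
    refine Finset.sum_nbij' (fun p => a * p.1) (fun t => (a⁻¹ * t, a * t⁻¹)) ?_ ?_ ?_ ?_ ?_
    · intro p hp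
      rw [memPair] at hp
      simp only [Finset.mem_filter, Finset.mem_univ, true_and]
      exact mul_ne_zero ha (left_ne_zero_of_mul_eq_one hp)
    · intro t ht
      simp only [Finset.mem_filter, Finset.mem_univ, true_and] at ht
      rw [memPair]
      field_simp
    · intro p hp
      rw [memPair] at hp
      have h2 : p.2 = p.1⁻¹ := (inv_eq_of_mul_eq_one_right hp).symm
      have h1 : p.1 ≠ 0 := left_ne_zero_of_mul_eq_one hp
      ext
      · simp; field_simp
      · simp [h2, mul_inv]; field_simp; try ring
    · intro t ht
      simp only [Finset.mem_filter, Finset.mem_univ, true_and] at ht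
      field_simp
    · intro p hp
      rw [memPair] at hp
      have h2 : p.2 = p.1⁻¹ := (inv_eq_of_mul_eq_one_right hp).symm
      have h1 : p.1 ≠ 0 := left_ne_zero_of_mul_eq_one hp
      congr 1
      rw [h2, mul_inv]
      field_simp
  -- sum over E
  have sumE : ∀ c : ℂ, ∑ ε ∈ E, c * canChar F (a * ε)
      = c * (canChar F a + canChar F (-a)) := by
    intro c
    rw [hE, Finset.sum_pair hne, mul_one, mul_neg_one, mul_add]
  -- the key vanishing sum
  have keyZ : ∑ α ∈ Finset.univ.filter (fun α : F => α ≠ 0), ∑ γ : F,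
      canChar F (a * (α * γ^2)) = 0 := by
    have hswap : ∑ α ∈ Finset.univ.filter (fun α : F => α ≠ 0), ∑ γ : F,
        canChar F (a * (α * γ^2)) = ∑ γ : F, ∑ α ∈ Finset.univ.filter (fun α : F => α ≠ 0),
        canChar F ((a * γ^2) * α) := by
      rw [Finset.sum_comm]
      exact Finset.sum_congr rfl (fun γ _ => Finset.sum_congr rfl (fun α _ => by ring_nf))
    rw [hswap]
    have hin : ∀ γ : F, γ ≠ 0 → ∑ α ∈ Finset.univ.filter (fun α : F => α ≠ 0),
        canChar F ((a * γ^2) * α) = -1 := by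
      intro γ hγ
      have hc : a * γ^2 ≠ 0 := mul_ne_zero ha (pow_ne_zero 2 hγ)
      rw [Finset.filter_ne', Finset.sum_erase_eq_sub (Finset.mem_univ 0),
        sum_canChar F _ hc, mul_zero, canChar_zero]
      ring
    have h0 : ∑ α ∈ Finset.univ.filter (fun α : F => α ≠ 0),
        canChar F ((a * (0:F)^2) * α) = (Fintype.card F : ℂ) - 1 := by
      have : ∀ α : F, canChar F ((a * (0:F)^2) * α) = 1 := by
        intro α
        rw [show (a * (0:F)^2) * α = 0 by ring, canChar_zero]
      rw [Finset.sum_congr rfl (fun α _ => this α), Finset.sum_const, Finset.filter_ne',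
        Finset.card_erase_of_mem (Finset.mem_univ 0), Finset.card_univ, nsmul_eq_mul, mul_one]
      have hpos : 1 ≤ Fintype.card F := Fintype.card_pos
      push_cast [Nat.cast_sub hpos]
      ring
    rw [← Finset.sum_erase_add Finset.univ _ (Finset.mem_univ (0:F)), h0]
    have hrest : ∑ γ ∈ Finset.univ.erase (0:F), ∑ α ∈ Finset.univ.filter (fun α : F => α ≠ 0),
        canChar F ((a * γ^2) * α) = ∑ γ ∈ Finset.univ.erase (0:F), (-1 : ℂ) := by
      exact Finset.sum_congr rfl (fun γ hγ => hin γ (Finset.ne_of_mem_erase hγ))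
    rw [hrest, Finset.sum_const, Finset.card_erase_of_mem (Finset.mem_univ 0),
      Finset.card_univ, nsmul_eq_mul]
    have hpos : 1 ≤ Fintype.card F := Fintype.card_pos
    push_cast [Nat.cast_sub hpos]
    ring
  -- the big-cell double sum vanishes
  have bigZ : ∀ β ε : F, ∑ p ∈ Pair, ∑ γ : F,
      canChar F (a * (p.1 * γ^2 + p.2 * β^2 - γ * β + ε)) = 0 := by
    intro β ε
    have hstep : ∀ p : F × F, p ∈ Pair → ∑ γ : F,
        canChar F (a * (p.1 * γ^2 + p.2 * β^2 - γ * β + ε))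
        = (∑ γ : F, canChar F (a * (p.1 * γ^2))) * canChar F (a * ε) := by
      intro p hp
      rw [memPair] at hp
      have h2 : p.2 = p.1⁻¹ := (inv_eq_of_mul_eq_one_right hp).symm
      have hshift : ∑ γ : F, canChar F (a * (p.1 * γ^2 + p.2 * β^2 - γ * β + ε))
          = ∑ γ : F, canChar F (a * (p.1 * γ^2 + ε)) := by
        refine (Fintype.sum_equiv (Equiv.subRight (p.2 * β)) _ _ ?_).symm
        intro γ
        simp only [Equiv.subRight_apply]
        congr 1
        linear_combination (2*a*β*γ - a*(p.2)*β^2)*hp + (a*β*γ - a*(p.2)*β^2)*h3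
      rw [hshift, Finset.sum_mul]
      exact Finset.sum_congr rfl (fun γ _ => by
        rw [show a * (p.1 * γ^2 + ε) = a * (p.1 * γ^2) + a * ε by ring, canChar_add])
    rw [Finset.sum_congr rfl hstep, ← Finset.sum_mul]
    have hpz : ∑ p ∈ Pair, ∑ γ : F, canChar F (a * (p.1 * γ^2)) = 0 := by
      rw [← keyZ]
      refine Finset.sum_nbij' (fun p => p.1) (fun α => (α, α⁻¹)) ?_ ?_ ?_ ?_ ?_
      · intro p hp
        rw [memPair] at hp
        simp only [Finset.mem_filter, Finset.mem_univ, true_and]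
        exact left_ne_zero_of_mul_eq_one hp
      · intro α hα
        simp only [Finset.mem_filter, Finset.mem_univ, true_and] at hα
        rw [memPair]
        exact mul_inv_cancel₀ hα
      · intro p hp
        rw [memPair] at hp
        have h2 : p.2 = p.1⁻¹ := (inv_eq_of_mul_eq_one_right hp).symm
        ext
        · rfl
        · simp [h2]
      · intro α hα
        rfl
      · intro p hp
        rfl
    rw [hpz, zero_mul]
  -- split the orthogonal-group sum
  have hsplit := Finset.sum_filter_add_sum_filter_not O (fun w => w 1 0 = 0) f
  -- parabolic part
  have hP : ∑ w ∈ O.filter (fun w => w 1 0 = 0), f w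
      = (canChar F a + canChar F (-a)) * (Fintype.card F : ℂ) * kloos F (a^2) := by
    have hbij : ∑ w ∈ O.filter (fun w => w 1 0 = 0), f w
        = ∑ t ∈ E ×ˢ ((Finset.univ : Finset F) ×ˢ Pair),
            canChar F (a * (t.2.2.1 + t.2.2.2 + t.1)) := by
      refine Finset.sum_nbij' (fun w : Matrix (Fin 3) (Fin 3) F => ((w 2 2, (w 2 1, (w 0 0, w 1 1))) : F × F × F × F))
        (fun t : F × F × F × F => pmat F t.2.2.1 t.2.2.2 t.2.1 t.1) ?_ ?_ ?_ ?_ ?_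
      · intro w hw
        simp only [Finset.mem_filter, hO, Finset.mem_univ, true_and] at hw
        obtain ⟨⟨hdet, hOw⟩, h10⟩ := hw
        obtain ⟨halpha, heps, hrec⟩ := P_recon F w hOw h10
        simp only [Finset.mem_product, Finset.mem_univ, true_and]
        exact ⟨(memE _).mpr heps, (memPair _).mpr halpha⟩
      · intro t ht
        simp only [Finset.mem_product, Finset.mem_univ, true_and] at ht
        obtain ⟨hε, hp⟩ := ht
        rw [memE] at hε
        rw [memPair] at hp
        obtain ⟨hd, hOm, h10⟩ := pmat_mem F _ _ _ _ hp hε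
        simp only [Finset.mem_filter, hO, Finset.mem_univ, true_and]
        exact ⟨⟨hd, hOm⟩, h10⟩
      · intro w hw
        simp only [Finset.mem_filter, hO, Finset.mem_univ, true_and] at hw
        obtain ⟨⟨hdet, hOw⟩, h10⟩ := hw
        exact (P_recon F w hOw h10).2.2.symm
      · intro t ht
        simp [pmat]
      · intro w hw
        simp only [Finset.mem_filter, hO, Finset.mem_univ, true_and] at hw
        obtain ⟨⟨hdet, hOw⟩, h10⟩ := hw
        rw [hf]
        simp only
        rw [Matrix.trace_fin_three]
    rw [hbij, Finset.sum_product]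
    have hinner : ∀ ε : F, ∑ y ∈ (Finset.univ : Finset F) ×ˢ Pair,
        canChar F (a * (y.2.1 + y.2.2 + ε))
        = ((Fintype.card F : ℂ) * kloos F (a^2)) * canChar F (a * ε) := by
      intro ε
      rw [Finset.sum_product]
      have hp : ∀ β : F, ∑ p ∈ Pair, canChar F (a * (p.1 + p.2 + ε))
          = kloos F (a^2) * canChar F (a * ε) := by
        intro β
        rw [← pairK, Finset.sum_mul]
        exact Finset.sum_congr rfl (fun p _ => by
          rw [show a * (p.1 + p.2 + ε) = (a * p.1 + a * p.2) + a * ε by ring, canChar_add])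
      rw [Finset.sum_congr rfl (fun β _ => hp β), Finset.sum_const, Finset.card_univ,
        nsmul_eq_mul]
      ring
    rw [Finset.sum_congr rfl (fun ε _ => hinner ε), sumE]
    ring
  -- big cell part
  have hB : ∑ w ∈ O.filter (fun w => ¬ w 1 0 = 0), f w = 0 := by
    have hbij : ∑ w ∈ O.filter (fun w => ¬ w 1 0 = 0), f w
        = ∑ t ∈ E ×ˢ ((Finset.univ : Finset F) ×ˢ (Pair ×ˢ (Finset.univ : Finset F))),
            canChar F (a * (t.2.2.1.1 * t.2.2.2^2 + t.2.2.1.2 * t.2.1^2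
              - t.2.2.2 * t.2.1 + t.1)) := by
      refine Finset.sum_nbij' (fun w : Matrix (Fin 3) (Fin 3) F =>
          ((w 2 2 + w 2 0 * (-(w 1 2) * (w 1 0)⁻¹),
          (-(w 1 2) * (w 1 0)⁻¹, (((w 1 0)⁻¹, w 1 0), w 2 0))) : F × F × (F × F) × F))
        (fun t : F × F × (F × F) × F => bmat F t.2.2.1.1 t.2.2.1.2 t.2.1 t.2.2.2 t.1)
        ?_ ?_ ?_ ?_ ?_
      · intro w hw
        simp only [Finset.mem_filter, hO, Finset.mem_univ, true_and] at hw
        obtain ⟨⟨hdet, hOw⟩, h10⟩ := hw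
        obtain ⟨hvu, heps, hrec⟩ := B_recon F w hOw h10
        simp only [Finset.mem_product, Finset.mem_univ, true_and, and_true]
        exact ⟨(memE _).mpr heps, (memPair _).mpr hvu⟩
      · intro t ht
        simp only [Finset.mem_product, Finset.mem_univ, true_and, and_true] at ht
        obtain ⟨hε, hp⟩ := ht
        rw [memE] at hε
        rw [memPair] at hp
        obtain ⟨hd, hOm, h10⟩ := bmat_mem F _ _ _ _ _ hp hε
        simp only [Finset.mem_filter, hO, Finset.mem_univ, true_and]
        exact ⟨⟨hd, hOm⟩, h10⟩
      · intro w hw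
        simp only [Finset.mem_filter, hO, Finset.mem_univ, true_and] at hw
        obtain ⟨⟨hdet, hOw⟩, h10⟩ := hw
        exact (B_recon F w hOw h10).2.2.symm
      · intro t ht
        simp only [Finset.mem_product, Finset.mem_univ, true_and, and_true] at ht
        obtain ⟨hε, hp⟩ := ht
        rw [memPair] at hp
        obtain ⟨ε, β, ⟨α, ai⟩, γ⟩ := t
        simp only at hp
        have hai0 : ai ≠ 0 := right_ne_zero_of_mul_eq_one hp
        have hα : ai⁻¹ = α := inv_eq_of_mul_eq_one_right (by linear_combination hp)
        have e10 : (bmat F α ai β γ ε) 1 0 = ai := by simp [bmat]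
        have e12 : (bmat F α ai β γ ε) 1 2 = -(ai*β) := by simp [bmat]
        have e20 : (bmat F α ai β γ ε) 2 0 = γ := by simp [bmat]
        have e22 : (bmat F α ai β γ ε) 2 2 = -(γ*β) + ε := by simp [bmat]
        have c1 : -(-(ai*β)) * ai⁻¹ = β := by rw [hα]; linear_combination β*hp
        simp only [e10, e12, e20, e22, hα, c1]
        simp [Prod.mk.injEq]
        refine ⟨by linear_combination (γ*β)*hp, by linear_combination β*hp⟩
      · intro w hw
        simp only [Finset.mem_filter, hO, Finset.mem_univ, true_and] at hw
        obtain ⟨⟨hdet, hOw⟩, h10⟩ := hw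
        have hrec := (B_recon F w hOw h10).2.2
        rw [hf]
        simp only
        have h00 : w 0 0 = (w 1 0)⁻¹ * (w 2 0)^2 := by
          conv_lhs => rw [hrec]
          simp [bmat]
        have h11 : w 1 1 = w 1 0 * (-(w 1 2) * (w 1 0)⁻¹)^2 := by
          conv_lhs => rw [hrec]
          simp [bmat]
          try ring
        rw [Matrix.trace_fin_three, h00, h11]
        congr 1
        ring
    rw [hbij, Finset.sum_product]
    have hz : ∀ ε : F, ∑ y ∈ (Finset.univ : Finset F) ×ˢ (Pair ×ˢ Finset.univ),
        canChar F (a * (y.2.1.1 * y.2.2^2 + y.2.1.2 * y.1^2 - y.2.2 * y.1 + ε)) = 0 := by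
      intro ε
      rw [Finset.sum_product]
      have : ∀ β : F, ∑ y ∈ Pair ×ˢ (Finset.univ : Finset F),
          canChar F (a * (y.1.1 * y.2^2 + y.1.2 * β^2 - y.2 * β + ε)) = 0 := by
        intro β
        rw [Finset.sum_product]
        exact bigZ β ε
      rw [Finset.sum_congr rfl (fun β _ => this β), Finset.sum_const, smul_zero]
    rw [Finset.sum_congr rfl (fun ε _ => hz ε), Finset.sum_const, smul_zero]
  have hcard : (Fintype.card F : ℂ) = (3:ℂ)^r := by
    rw [hF]; push_cast; ring
  have main : ∑ w ∈ O, f w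
      = (canChar F a + canChar F (-a)) * (3 ^ r : ℂ) * kloos F (a ^ 2) := by
    rw [← hsplit, hP, hB]
    rw [hcard]
    ring
  constructor
  · exact main
  · rw [main]
    have hconj : canChar F a + canChar F (-a) = 2 * ((canChar F a).re : ℂ) := by
      rw [← canChar_conj, Complex.add_conj]
      push_cast
      ring
    rw [hconj]
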